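/- There is no automatic left-order on the free group on two generators. Precisely: there is no linear order ≤ on the free group F₂ on two generators such that (i) ≤ is left-invariant, i.e. for all a, b, c ∈ F₂, b ≤ c implies a·b ≤ a·c, and (ii) the language consisting of all reduced words, over the four-letter alphabet of the two generators and their formal inverses, that represent an element g with 1 < g, is a regular language. -/

import Mathlib

namespace NALO
open FreeGroup List

variable {α : Type*} [DecidableEq α]

/-- no-cancellation relation between adjacent letters -/
def NC (a b : α × Bool) : Prop := ¬(a.1 = b.1 ∧ a.2 = !b.2)

def Reduced (w : List (α × Bool)) : Prop := w.Chain' NC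


theorem reduced_iff (w : List (α × Bool)) : reduce w = w ↔ Reduced w := by
  constructor
  · intro h
    induction w with
    | nil => exact List.isChain_nil
    | cons x L ih =>
      rw [reduce.cons] at h
      rcases hr : reduce L with _ | ⟨hd, tl⟩
      · rw [hr] at h
        change ([x] : List (α × Bool)) = x :: L at h
        have : L = [] := by
          cases L with
          | nil => rfl
          | cons a l =>
            exfalso
            have : ([x] : List (α × Bool)).length = (x :: a :: l).length := by rw [h]
            simp at this
        subst this
        exact List.isChain_singleton x
      · rw [hr] at h
        change (if x.1 = hd.1 ∧ x.2 = !hd.2 then tl else x :: hd :: tl) = x :: L at h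
        by_cases hc : x.1 = hd.1 ∧ x.2 = !hd.2
        · rw [if_pos hc] at h
          exfalso
          have hlen : (reduce L).length ≤ L.length := (reduce.red (L := L)).length_le
          rw [hr] at hlen
          simp only [List.length_cons] at hlen
          have : tl.length = (x :: L).length := by rw [h]
          simp at this
          omega
        · rw [if_neg hc] at h
          have hL : L = hd :: tl := by
            have := h
            cases this
            rfl
          have hred : reduce L = L := by rw [hr, hL]
          have := ih hred
          rw [hL]
          exact List.isChain_cons_cons.2 ⟨hc, hL ▸ this⟩
  · intro h
    induction w with
    | nil => rfl
    | cons x L ih =>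
      have hL : Reduced L := h.tail
      rw [reduce.cons, ih hL]
      cases L with
      | nil => rfl
      | cons hd tl =>
        have hrel : NC x hd := (List.isChain_cons_cons.1 h).1
        change (if x.1 = hd.1 ∧ x.2 = !hd.2 then tl else x :: hd :: tl) = x :: hd :: tl
        rw [if_neg hrel]

theorem reduced_toWord (g : FreeGroup α) : Reduced g.toWord :=
  (reduced_iff _).1 (reduce_toWord g)

theorem toWord_mk' {w : List (α × Bool)} (h : Reduced w) : (mk w).toWord = w := by
  rw [toWord_mk, (reduced_iff w).2 h]

theorem norm_mk' {w : List (α × Bool)} (h : Reduced w) : norm (mk w) = w.length := by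
  unfold FreeGroup.norm
  rw [toWord_mk' h]

theorem reduced_invRev {w : List (α × Bool)} (h : Reduced w) : Reduced (invRev w) := by
  rw [← reduced_iff, FreeGroup.reduce_invRev, (reduced_iff w).2 h]


theorem head?_invRev (p : List (α × Bool)) :
    (invRev p).getLast? = p.head?.map (fun a => (a.1, !a.2)) := by
  unfold invRev
  rw [List.getLast?_reverse, List.head?_map]

theorem reduced_inv_append {p q : List (α × Bool)} (hp : Reduced p) (hq : Reduced q)
    (hsep : ∀ a ∈ p.head?, ∀ b ∈ q.head?, a ≠ b) : Reduced (invRev p ++ q) := by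
  refine List.isChain_append.2 ⟨reduced_invRev hp, hq, ?_⟩
  intro x hx y hy
  rw [head?_invRev] at hx
  simp only [Option.mem_def, Option.map_eq_some_iff] at hx
  obtain ⟨a, ha, rfl⟩ := hx
  intro hbad
  obtain ⟨h1, h2⟩ := hbad
  simp only at h1 h2
  exact hsep a ha y hy (Prod.ext h1 (Bool.not_inj h2))

theorem norm_inv_mul {p q : List (α × Bool)} (hp : Reduced p) (hq : Reduced q)
    (hsep : ∀ a ∈ p.head?, ∀ b ∈ q.head?, a ≠ b) :
    norm ((mk p)⁻¹ * mk q) = p.length + q.length := by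
  rw [inv_mk, mul_mk, norm_mk' (reduced_inv_append hp hq hsep), List.length_append,
    invRev_length]

theorem tree_sep : ∀ (v : List (α × Bool)) (x : α × Bool) (p q : List (α × Bool)),
    Reduced p → Reduced q → (v ++ [x]) <+: p → ¬((v ++ [x]) <+: q) →
    p.length ≤ v.length + norm ((mk p)⁻¹ * mk q) := by
  intro v
  induction v with
  | nil =>
    intro x p q hp hq hpre hnpre
    obtain ⟨r, rfl⟩ := hpre
    by_cases hq0 : q.head? = some x
    · exfalso
      cases q with
      | nil => simp at hq0
      | cons b q' =>
        simp only [List.head?_cons, Option.some.injEq] at hq0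
        subst hq0
        exact hnpre ⟨q', rfl⟩
    · have hsep : ∀ a ∈ (([x] ++ r) : List (α × Bool)).head?, ∀ b ∈ q.head?, a ≠ b := by
        intro a ha b hb
        simp only [List.singleton_append, List.head?_cons, Option.mem_def,
          Option.some.injEq] at ha
        subst ha
        rintro rfl
        exact hq0 hb
      rw [norm_inv_mul hp hq hsep]
      simp
  | cons ℓ v' ih =>
    intro x p q hp hq hpre hnpre
    obtain ⟨r, hr⟩ := hpre
    have hp' : p = ℓ :: ((v' ++ [x]) ++ r) := by
      rw [← hr]; simp
    subst hp'
    by_cases hq0 : q.head? = some ℓ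
    · cases q with
      | nil => simp at hq0
      | cons b q' =>
        simp only [List.head?_cons, Option.some.injEq] at hq0
        subst hq0
        have hnpre' : ¬((v' ++ [x]) <+: q') := by
          intro ⟨r', hr'⟩
          refine hnpre ⟨r', ?_⟩
          subst hr'
          simp
        have hgrp : (mk (b :: ((v' ++ [x]) ++ r)))⁻¹ * mk (b :: q')
            = (mk ((v' ++ [x]) ++ r))⁻¹ * mk q' := by
          have e1 : mk (b :: ((v' ++ [x]) ++ r)) = mk [b] * mk ((v' ++ [x]) ++ r) := by
            rw [mul_mk]; rfl
          have e2 : mk (b :: q') = mk [b] * mk q' := by rw [mul_mk]; rfl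
          rw [e1, e2, mul_inv_rev]
          group
        rw [hgrp]
        have := ih x ((v' ++ [x]) ++ r) q' hp.tail hq.tail ⟨r, rfl⟩ hnpre'
        simp only [List.length_cons]
        omega
    · have hsep : ∀ a ∈ (ℓ :: ((v' ++ [x]) ++ r)).head?, ∀ b ∈ q.head?, a ≠ b := by
        intro a ha b hb
        simp only [List.head?_cons, Option.mem_def, Option.some.injEq] at ha
        subst ha
        rintro rfl
        exact hq0 hb
      rw [norm_inv_mul hp hq hsep]
      simp only [List.length_cons]
      omega



section Order

abbrev F2 := FreeGroup (Fin 2)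

variable [LinearOrder F2] (hmul : ∀ a b c : F2, b ≤ c → a * b ≤ a * c)

include hmul

theorem hlt (a : F2) {b c : F2} (h : b < c) : a * b < a * c :=
  lt_of_le_of_ne (hmul a b c h.le) fun he => h.ne (mul_left_cancel he)

theorem inv_pos_of_neg {u : F2} (h : u < 1) : 1 < u⁻¹ := by
  have := hlt hmul u⁻¹ h
  simpa using this

theorem one_lt_pow' {c : F2} (hc : 1 < c) : ∀ n : ℕ, 1 < c ^ (n + 1) := by
  intro n
  induction n with
  | zero => simpa using hc
  | succ n ih =>
    rw [pow_succ]
    have := hlt hmul (c ^ (n+1)) hc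
    rw [mul_one] at this
    calc (1 : F2) < c ^ (n+1) := ih
    _ < c ^ (n+1) * c := this

theorem force_right {s u : F2} (hu : u ≠ 1) : s < s * u ∨ s < s * u⁻¹ := by
  by_contra hcon
  push_neg at hcon
  obtain ⟨h1, h2⟩ := hcon
  have hu1 : u ≤ 1 := by
    have := hmul s⁻¹ _ _ h1
    simpa [mul_assoc] using this
  have hu2 : u⁻¹ ≤ 1 := by
    have := hmul s⁻¹ _ _ h2
    simpa [mul_assoc] using this
  have : u < 1 := lt_of_le_of_ne hu1 hu
  exact absurd (inv_pos_of_neg hmul this) (not_lt.2 hu2)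

theorem force_left {s u : F2} (hu : u ≠ 1) : s < u * s ∨ s < u⁻¹ * s := by
  by_contra hcon
  push_neg at hcon
  obtain ⟨h1, h2⟩ := hcon
  have h3 : s ≤ u * s := by
    have := hmul u _ _ h2
    simpa [← mul_assoc] using this
  have : u * s = s := le_antisymm h1 h3
  exact hu (by
    have : u * s = 1 * s := by simpa using this
    exact mul_right_cancel this)

def og (i : Fin 2) : Fin 2 := if i = 0 then 1 else 0

omit hmul in
theorem og_ne (i : Fin 2) : og i ≠ i := by fin_cases i <;> decide

/-- Lemma A: above any element there is one whose reduced word does not start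
with the forbidden letter `x`. -/
theorem exists_gt_head_ne (s : F2) (x : Fin 2 × Bool) :
    ∃ h : F2, s < h ∧ ∀ b ∈ h.toWord.head?, b ≠ x := by
  rcases htw : s.toWord with _ | ⟨f, t'⟩
  · -- s = 1
    have hs1 : s = 1 := toWord_eq_nil_iff.mp htw
    set y : Fin 2 × Bool := (og x.1, true) with hy
    have hyx : y.1 ≠ x.1 := og_ne x.1
    have hinv : (mk [y])⁻¹ = mk [(y.1, !y.2)] := by
      rw [inv_mk]; simp [invRev]
    have hu : mk [y] ≠ 1 := by
      intro h
      have := congrArg toWord h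
      rw [toWord_mk' (List.isChain_singleton y), toWord_one] at this
      simp at this
    rcases force_right hmul (s := s) hu with h | h
    · refine ⟨s * mk [y], h, ?_⟩
      rw [hs1, one_mul, toWord_mk' (List.isChain_singleton y)]
      intro b hb
      simp only [List.head?_cons, Option.mem_def, Option.some.injEq] at hb
      subst hb
      exact fun hbx => hyx (by rw [hbx])
    · refine ⟨s * (mk [y])⁻¹, h, ?_⟩
      rw [hs1, one_mul, hinv, toWord_mk' (List.isChain_singleton _)]
      intro b hb
      simp only [List.head?_cons, Option.mem_def, Option.some.injEq] at hb
      subst hb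
      exact fun hbx => hyx (by rw [← hbx])
  · by_cases hfx : f.1 = x.1
    · -- left multiplication by other generator
      set y : Fin 2 × Bool := (og f.1, true) with hy
      have hyf : y.1 ≠ f.1 := og_ne f.1
      have hsmk : s = mk (f :: t') := by rw [← htw, mk_toWord]
      have hred : Reduced (f :: t') := htw ▸ reduced_toWord s
      have key : ∀ z : Fin 2 × Bool, z.1 = y.1 →
          (mk [z] * s).toWord.head? = some z := by
        intro z hz
        have hredz : Reduced (z :: f :: t') :=
          List.isChain_cons_cons.2 ⟨fun hc => (hz ▸ hyf) hc.1, hred⟩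
        have : mk [z] * s = mk (z :: f :: t') := by
          rw [hsmk, mul_mk]; rfl
        rw [this, toWord_mk' hredz]
        rfl
      have hinv : (mk [y])⁻¹ = mk [(y.1, !y.2)] := by
        rw [inv_mk]; simp [invRev]
      have hu : mk [y] ≠ 1 := by
        intro h
        have := congrArg toWord h
        rw [toWord_mk' (List.isChain_singleton y), toWord_one] at this
        simp at this
      rcases force_left hmul (s := s) hu with h | h
      · refine ⟨mk [y] * s, h, ?_⟩
        rw [key y rfl]
        rintro b hb
        simp only [Option.mem_def, Option.some.injEq] at hb
        subst hb
        exact fun hbx => hyf (by rw [hbx, hfx])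
      · refine ⟨(mk [y])⁻¹ * s, h, ?_⟩
        rw [hinv, key (y.1, !y.2) rfl]
        rintro b hb
        simp only [Option.mem_def, Option.some.injEq] at hb
        subst hb
        intro hbx
        have h5 : y.1 = x.1 := by
          have := congrArg Prod.fst hbx
          simpa [hy] using this
        exact hyf (h5.trans hfx.symm)
      -- note: heads are y or (y.1,!y.2) whose .1 = y.1 ≠ f.1 = x.1
    · -- right multiplication, head stays f ≠ x
      have hsmk : s = mk (f :: t') := by rw [← htw, mk_toWord]
      have hred : Reduced (f :: t') := htw ▸ reduced_toWord s
      set lam : Fin 2 × Bool := (f :: t').getLast (by simp) with hlam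
      set y : Fin 2 × Bool := (og lam.1, true) with hy
      have hyl : y.1 ≠ lam.1 := og_ne lam.1
      have key : ∀ z : Fin 2 × Bool, z.1 = y.1 →
          (s * mk [z]).toWord.head? = some f := by
        intro z hz
        have hredz : Reduced ((f :: t') ++ [z]) := by
          refine List.isChain_append.2 ⟨hred, List.isChain_singleton z, ?_⟩
          intro u hu v hv
          rw [List.getLast?_eq_getLast (by simp)] at hu
          simp only [Option.mem_def, Option.some.injEq, List.head?_cons] at hu hv
          subst hu; subst hv
          exact fun hc => (hz ▸ hyl) hc.1.symm
        have : s * mk [z] = mk ((f :: t') ++ [z]) := by rw [hsmk, mul_mk]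
        rw [this, toWord_mk' hredz]
        rfl
      have hinv : (mk [y])⁻¹ = mk [(y.1, !y.2)] := by
        rw [inv_mk]; simp [invRev]
      have hu : mk [y] ≠ 1 := by
        intro h
        have := congrArg toWord h
        rw [toWord_mk' (List.isChain_singleton y), toWord_one] at this
        simp at this
      rcases force_right hmul (s := s) hu with h | h
      · refine ⟨s * mk [y], h, ?_⟩
        rw [key y rfl]
        rintro b hb
        simp only [Option.mem_def, Option.some.injEq] at hb
        subst hb
        exact fun hbx => hfx (by rw [hbx])
      · refine ⟨s * (mk [y])⁻¹, h, ?_⟩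
        rw [hinv, key (y.1, !y.2) rfl]
        rintro b hb
        simp only [Option.mem_def, Option.some.injEq] at hb
        subst hb
        exact fun hbx => hfx (by rw [hbx])

/-- dominator of the ball of radius K -/
theorem exists_dominator : ∀ K : ℕ, ∃ M : F2, ∀ s : F2, norm s ≤ K → s ≤ M := by
  intro K
  induction K with
  | zero =>
    refine ⟨1, fun s hs => ?_⟩
    rw [Nat.le_zero, FreeGroup.norm_eq_zero] at hs
    exact le_of_eq hs
  | succ K ih =>
    obtain ⟨M, hM⟩ := ih
    classical
    refine ⟨max (max (max (mk [((0 : Fin 2), true)] * M) (mk [((0 : Fin 2), false)] * M))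
      (max (mk [((1 : Fin 2), true)] * M) (mk [((1 : Fin 2), false)] * M))) M, ?_⟩
    intro s hs
    rcases htw : s.toWord with _ | ⟨ℓ, w⟩
    · have hs1 : s = 1 := toWord_eq_nil_iff.mp htw
      have : s ≤ M := by
        rw [hs1]
        exact hM 1 (by simp [FreeGroup.norm_one])
      exact le_trans this (le_max_right _ _)
    · have hsmk : s = mk (ℓ :: w) := by rw [← htw, mk_toWord]
      have hred : Reduced (ℓ :: w) := htw ▸ reduced_toWord s
      have hnorm : norm s = (ℓ :: w).length := by
        unfold FreeGroup.norm
        rw [htw]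
      have hnw : norm (mk w) = w.length := norm_mk' hred.tail
      have hle : norm (mk w) ≤ K := by
        rw [hnw]
        simp only [List.length_cons] at hnorm
        omega
      have h1 : mk w ≤ M := hM _ hle
      have h2 : s = mk [ℓ] * mk w := by rw [hsmk, mul_mk]; rfl
      have h3 : mk [ℓ] * mk w ≤ mk [ℓ] * M := hmul _ _ _ h1
      have h4 : mk [ℓ] * M ≤ max (max (mk [((0 : Fin 2), true)] * M)
          (mk [((0 : Fin 2), false)] * M))
          (max (mk [((1 : Fin 2), true)] * M) (mk [((1 : Fin 2), false)] * M)) := by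
        obtain ⟨i, b⟩ := ℓ
        fin_cases i <;> cases b
        · exact le_trans (le_max_right _ _) (le_max_left _ _)
        · exact le_trans (le_max_left _ _) (le_max_left _ _)
        · exact le_trans (le_max_right _ _) (le_max_right _ _)
        · exact le_trans (le_max_left _ _) (le_max_right _ _)
      calc s = mk [ℓ] * mk w := h2
      _ ≤ mk [ℓ] * M := h3
      _ ≤ _ := le_trans h4 (le_max_left _ _)

end Order

end NALO


open FreeGroup List NALO

/-- There is no automatic left-order on the free group `F₂` on two generators:
there is no linear order on `FreeGroup (Fin 2)` that is left-invariant and such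
that the language of reduced words (over the alphabet `Fin 2 × Bool` of
generators and their formal inverses) representing a positive element is a
regular language. -/
theorem no_automatic_left_order_on_free_group_two :
    ¬ ∃ lo : LinearOrder (FreeGroup (Fin 2)),
        (∀ a b c : FreeGroup (Fin 2), lo.le b c → lo.le (a * b) (a * c)) ∧
        Language.IsRegular
          {w : List (Fin 2 × Bool) |
            FreeGroup.reduce w = w ∧ lo.lt 1 (FreeGroup.mk w)} := by
  rintro ⟨lo, hmul0, hreg⟩
  letI := lo
  have hmul : ∀ a b c : F2, b ≤ c → a * b ≤ a * c := hmul0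
  obtain ⟨σ, finσ, M, hM⟩ := hreg
  have hmem : ∀ w : List (Fin 2 × Bool),
      w ∈ M.accepts ↔ (FreeGroup.reduce w = w ∧ 1 < FreeGroup.mk w) := by
    intro w
    rw [hM]
    exact Iff.rfl
  set n := Fintype.card σ with hndef
  have hn : 0 < n := Fintype.card_pos_iff.mpr ⟨M.start⟩
  -- a positive single-letter element
  obtain ⟨c, hc, ℓc, hcℓ⟩ : ∃ c : F2, (1 < c) ∧ ∃ ℓc : Fin 2 × Bool, c = mk [ℓc] := by
    have hne : (mk [((0 : Fin 2), true)] : F2) ≠ 1 := by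
      intro h
      have := congrArg toWord h
      rw [toWord_mk' (List.isChain_singleton _), toWord_one] at this
      simp at this
    rcases lt_trichotomy (1 : F2) (mk [((0 : Fin 2), true)]) with h | h | h
    · exact ⟨_, h, _, rfl⟩
    · exact absurd h.symm hne
    · refine ⟨(mk [((0 : Fin 2), true)])⁻¹, inv_pos_of_neg hmul h, ((0 : Fin 2), false), ?_⟩
      rw [inv_mk]
      simp [invRev]
  set K := 3 * n with hKdef
  obtain ⟨M0, hM0⟩ := exists_dominator hmul K
  set R := n + norm M0 + 1 with hRdef
  have hcR : 1 < c ^ R := by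
    have := one_lt_pow' hmul hc (n + norm M0)
    rwa [hRdef]
  set vinv := M0 * c ^ R with hvinvdef
  set v := vinv⁻¹ with hvdef
  -- norm of c^R
  have hpowmk : ∀ m : ℕ, (mk [ℓc] : F2) ^ m = mk (List.replicate m ℓc) := by
    intro m
    induction m with
    | zero => rw [pow_zero, List.replicate_zero, FreeGroup.one_eq_mk]
    | succ m ih =>
      rw [pow_succ', ih, mul_mk, List.replicate_succ]
      rfl
  have hredrep : ∀ m : ℕ, Reduced (List.replicate m ℓc) := fun m =>
    (reduced_iff _).1 (reduce_replicate m ℓc)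
  have hnormcR : norm (c ^ R) = R := by
    rw [hcℓ, hpowmk R, norm_mk' (hredrep R), List.length_replicate]
  have hnormv : n + 1 ≤ norm v := by
    have h1 : norm v = norm vinv := norm_inv_eq
    have h2 : c ^ R = M0⁻¹ * vinv := by rw [hvinvdef]; group
    have h3 : norm (c ^ R) ≤ norm M0⁻¹ + norm vinv := h2 ▸ norm_mul_le _ _
    rw [norm_inv_eq, hnormcR] at h3
    omega
  have hdom : ∀ t : F2, norm t ≤ K → t < vinv := by
    intro t ht
    have h1 : t ≤ M0 := hM0 t ht
    have h2 : M0 < vinv := by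
      have := hlt hmul M0 hcR
      rwa [mul_one] at this
    exact lt_of_le_of_lt h1 h2
  have hvinv_pos : 1 < vinv := hdom 1 (by rw [FreeGroup.norm_one]; omega)
  have hvneg : v < 1 := by
    have := hlt hmul vinv⁻¹ hvinv_pos
    rw [mul_one, inv_mul_cancel] at this
    rwa [hvdef]
  have hvne1 : v ≠ 1 := ne_of_lt hvneg
  set wv := v.toWord with hwvdef
  have hwvlen : wv.length = norm v := rfl
  have hwvne : wv ≠ [] := by
    rw [hwvdef]
    exact fun h => hvne1 (toWord_eq_nil_iff.mp h)
  set lam := wv.getLast hwvne with hlamdef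
  obtain ⟨h, hvh, hhead⟩ := exists_gt_head_ne hmul vinv (lam.1, !lam.2)
  have hhpos : 1 < h := lt_trans hvinv_pos hvh
  have hwhne : h.toWord ≠ [] := fun he => (ne_of_gt hhpos) (toWord_eq_nil_iff.mp he)
  set wh := h.toWord with hwhdef
  set x := wh.head hwhne with hxdef
  have hjunction : Reduced (wv ++ wh) := by
    refine List.isChain_append.2 ⟨reduced_toWord v, reduced_toWord h, ?_⟩
    intro u hu b hb
    rw [List.getLast?_eq_getLast hwvne] at hu
    simp only [Option.mem_def, Option.some.injEq] at hu
    subst hu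
    have hbx : b ≠ (lam.1, !lam.2) := hhead b hb
    intro hcon
    obtain ⟨e1, e2⟩ := hcon
    apply hbx
    have : b.2 = !lam.2 := by rw [e2, Bool.not_not]
    exact Prod.ext e1.symm this
  set g0 := v * h with hg0def
  have hg0pos : 1 < g0 := by
    have h1 : v * vinv < v * h := hlt hmul v hvh
    rwa [hvdef, inv_mul_cancel] at h1
  have hg0w : g0.toWord = wv ++ wh := by
    rw [hg0def]
    have : v * h = mk (wv ++ wh) := by
      rw [← mul_mk, hwvdef, hwhdef, mk_toWord, mk_toWord]
    rw [this, toWord_mk' hjunction]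
  have hwh_cons : wh = x :: wh.tail := (List.cons_head_tail hwhne).symm
  have hg0pre : (wv ++ [x]) <+: g0.toWord := by
    rw [hg0w]
    refine ⟨wh.tail, ?_⟩
    rw [List.append_assoc, List.singleton_append, ← hwh_cons]
  -- main strong induction
  have key : ∀ N : ℕ, ∀ g : F2, norm g ≤ N → 1 < g → (wv ++ [x]) <+: g.toWord → False := by
    intro N
    induction N using Nat.strong_induction_on with
    | _ N ih =>
    intro g hgN hgpos hgpre
    have hwred : Reduced g.toWord := reduced_toWord g
    have hwacc : g.toWord ∈ M.accepts := by
      rw [hmem]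
      exact ⟨reduce_toWord g, by rw [mk_toWord]; exact hgpos⟩
    have hlenw : n + 2 ≤ g.toWord.length := by
      have h1 : (wv ++ [x]).length ≤ g.toWord.length := hgpre.length_le
      rw [List.length_append, List.length_singleton, hwvlen] at h1
      omega
    set w := g.toWord with hwdef
    set base := w.length - (n + 1) with hbasedef
    have main : ∀ a b : Fin (n + 1), (a : ℕ) < (b : ℕ) →
        M.evalFrom M.start (w.take (base + (a : ℕ))) = M.evalFrom M.start (w.take (base + (b : ℕ))) →
        False := by
      intro a b hab heq0
      set A := w.take (base + (a : ℕ)) with hAdef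
      set AB := w.take (base + (b : ℕ)) with hABdef
      set B := AB.drop (base + (a : ℕ)) with hBdef
      set C := w.drop (base + (b : ℕ)) with hCdef
      have heq' : M.evalFrom M.start A = M.evalFrom M.start AB := heq0
      have hwlen' : base + (n+1) = w.length := by
        rw [hbasedef]
        omega
      have hA_AB : A = AB.take (base + (a : ℕ)) := by
        rw [hAdef, hABdef, List.take_take,
          min_eq_left (Nat.add_le_add_left hab.le base)]
      have hA_B : A ++ B = AB := by
        rw [hBdef, hA_AB, List.take_append_drop]
      have hAB_C : AB ++ C = w := by rw [hABdef, hCdef, List.take_append_drop]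
      have han : (a : ℕ) ≤ n := Nat.lt_succ_iff.mp a.isLt
      have hbn : (b : ℕ) ≤ n := Nat.lt_succ_iff.mp b.isLt
      have hlenA : A.length = base + (a : ℕ) := by
        rw [hAdef, List.length_take, min_eq_left (by omega)]
      have hlenAB : AB.length = base + (b : ℕ) := by
        rw [hABdef, List.length_take, min_eq_left (by omega)]
      have hlenC : C.length = (n + 1) - (b : ℕ) := by
        rw [hCdef, List.length_drop]
        omega
      have hlenB : B.length = (b : ℕ) - (a : ℕ) := by
        rw [hBdef, List.length_drop, hlenAB]
        omega
      have haccAC : (A ++ C) ∈ M.accepts := by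
        rw [DFA.mem_accepts] at hwacc ⊢
        have e1 : M.eval (A ++ C) = M.evalFrom (M.evalFrom M.start A) C :=
          M.evalFrom_of_append _ _ _
        have e3 : M.eval w = M.evalFrom (M.evalFrom M.start AB) C := by
          conv_lhs => rw [← hAB_C]
          exact M.evalFrom_of_append _ _ _
        rw [e1, heq', ← e3]
        exact hwacc
      rw [hmem] at haccAC
      obtain ⟨hred', hpos'⟩ := haccAC
      set g' := mk (A ++ C) with hg'def
      have hredAC : Reduced (A ++ C) := (reduced_iff _).1 hred'
      have hg'w : g'.toWord = A ++ C := toWord_mk' hredAC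
      have hg'norm : FreeGroup.norm g' = A.length + C.length := by
        rw [norm_mk' hredAC, List.length_append]
      have hgw : g = mk w := by rw [hwdef, mk_toWord]
      have hglen : FreeGroup.norm g = w.length := rfl
      have hnormlt : FreeGroup.norm g' < FreeGroup.norm g := by
        rw [hg'norm, hglen]
        omega
      have hdist : FreeGroup.norm (g⁻¹ * g') ≤ K := by
        have hsplit : g = mk A * mk B * mk C := by
          rw [mul_mk, mul_mk, hA_B, hAB_C, hgw]
        have hsplit' : g' = mk A * mk C := by rw [hg'def, mul_mk]
        have hform : g⁻¹ * g' = (mk C)⁻¹ * (mk B)⁻¹ * mk C := by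
          rw [hsplit, hsplit']
          group
        rw [hform]
        have t1 : FreeGroup.norm ((mk C)⁻¹ * (mk B)⁻¹ * mk C) ≤
            FreeGroup.norm ((mk C)⁻¹ * (mk B)⁻¹) + FreeGroup.norm (mk C) :=
          norm_mul_le _ _
        have t2 : FreeGroup.norm ((mk C)⁻¹ * (mk B)⁻¹) ≤
            FreeGroup.norm ((mk C)⁻¹) + FreeGroup.norm ((mk B)⁻¹) := norm_mul_le _ _
        have t3 : FreeGroup.norm ((mk C)⁻¹) = FreeGroup.norm (mk C) := norm_inv_eq
        have t4 : FreeGroup.norm ((mk B)⁻¹) = FreeGroup.norm (mk B) := norm_inv_eq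
        have t5 : FreeGroup.norm (mk C : F2) ≤ C.length := norm_mk_le
        have t6 : FreeGroup.norm (mk B : F2) ≤ B.length := norm_mk_le
        rw [hKdef]
        omega
      have hpos'' : (1 : F2) < g' := hpos'
      by_cases hpre' : (wv ++ [x]) <+: g'.toWord
      · exact ih (FreeGroup.norm g') (lt_of_lt_of_le hnormlt hgN) g' le_rfl hpos'' hpre'
      · -- crossing: tree separation
        have hsep := tree_sep wv x w (A ++ C) hwred hredAC hgpre
          (by rw [← hg'w]; exact hpre')
        have hsep' : w.length ≤ wv.length + FreeGroup.norm (g⁻¹ * g') := by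
          rw [← hgw, ← hg'def] at hsep
          exact hsep
        -- g = v * t with norm t ≤ K
        have hpre0 : wv <+: w := (List.prefix_append wv [x]).trans hgpre
        have htake : wv = w.take wv.length := List.prefix_iff_eq_take.mp hpre0
        have hsplitw : w = wv ++ w.drop wv.length := by
          conv_lhs => rw [← List.take_append_drop wv.length w]
          rw [← htake]
        set t := mk (w.drop wv.length) with htdef
        have hgvt : g = v * t := by
          rw [hgw]
          conv_lhs => rw [hsplitw]
          rw [← mul_mk, htdef, hwvdef, mk_toWord]
        have htnorm : FreeGroup.norm t ≤ K := by
          have l1 : FreeGroup.norm t ≤ (w.drop wv.length).length := norm_mk_le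
          rw [List.length_drop] at l1
          omega
        have htlt : t < vinv := hdom t htnorm
        have : v * t < v * vinv := hlt hmul v htlt
        rw [hvdef, inv_mul_cancel, ← hvdef, ← hgvt] at this
        exact absurd hgpos (not_lt.2 this.le)
    -- pigeonhole
    have hcard : Fintype.card σ < Fintype.card (Fin (n + 1)) := by
      rw [Fintype.card_fin]
      omega
    obtain ⟨a, b, hne, heqf⟩ := Fintype.exists_ne_map_eq_of_card_lt
      (fun j : Fin (n + 1) => M.evalFrom M.start (w.take (base + (j : ℕ)))) hcard
    rcases lt_or_gt_of_ne hne with hab | hab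
    · exact main a b (by exact_mod_cast hab) heqf
    · exact main b a (by exact_mod_cast hab) heqf.symm
  exact key (norm g0) g0 le_rfl hg0pos hg0pre
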